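/- Let f : ℝ → ℝ be a C² function such that lim_{u→+∞} f(u) = −∞, lim_{u→−∞} f(u) = +∞, and there exists M > 0 with u f''(u) ≤ 0 for all |u| ≥ M. Let p ∈ (0,1]. Then for every C₀ > 0 there exists C = C(C₀, p) > 0 such that for all u ∈ ℝ with |u| ≤ C₀ and all R ∈ ℝ: ( f(u+R) − f(u) − f'(u) R ) · R ≤ C |R|^{p+2}. -/

import Mathlib

open Set Filter
open scoped Topology

theorem stmt_10 (f : ℝ → ℝ) (hf : ContDiff ℝ 2 f)
    (htop : Tendsto f atTop atBot) (hbot : Tendsto f atBot atTop)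
    (M : ℝ) (hM : 0 < M) (hconc : ∀ u : ℝ, M ≤ |u| → u * iteratedDeriv 2 f u ≤ 0)
    (p : ℝ) (hp0 : 0 < p) (hp1 : p ≤ 1) :
    ∀ C₀ > (0 : ℝ), ∃ C > (0 : ℝ), ∀ u R : ℝ, |u| ≤ C₀ →
      (f (u + R) - f u - deriv f u * R) * R ≤ C * |R| ^ (p + 2) := by
  intro C₀ hC₀
  have h11 : ContDiff ℝ (1 + 1) f := by exact_mod_cast hf
  have hd1 : Differentiable ℝ f := hf.differentiable (by norm_num)
  have hdf : ContDiff ℝ 1 (deriv f) := (contDiff_succ_iff_deriv.mp h11).2.2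
  have hdf1 : Differentiable ℝ (deriv f) := hdf.differentiable (by norm_num)
  have hcf : Continuous f := hd1.continuous
  have hcdf : Continuous (deriv f) := hdf1.continuous
  have hcddf : Continuous (deriv (deriv f)) := hdf.continuous_deriv le_rfl
  obtain ⟨K0, hK0⟩ := (isCompact_Icc (a := -(C₀+1)) (b := C₀+1)).exists_bound_of_continuousOn
    hcf.continuousOn
  obtain ⟨K1, hK1⟩ := (isCompact_Icc (a := -(C₀+1)) (b := C₀+1)).exists_bound_of_continuousOn
    hcdf.continuousOn
  obtain ⟨K2, hK2⟩ := (isCompact_Icc (a := -(C₀+1)) (b := C₀+1)).exists_bound_of_continuousOn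
    hcddf.continuousOn
  obtain ⟨T, hT⟩ := eventually_atTop.mp (htop.eventually_le_atBot 0)
  obtain ⟨A1, hA1⟩ := (isCompact_Icc (a := 1 - C₀) (b := T)).exists_bound_of_continuousOn
    hcf.continuousOn
  obtain ⟨S, hS⟩ := eventually_atBot.mp (hbot.eventually_ge_atTop 0)
  obtain ⟨B1, hB1⟩ := (isCompact_Icc (a := S) (b := C₀ - 1)).exists_bound_of_continuousOn
    hcf.continuousOn
  set A : ℝ := max A1 0 with hAdef
  set B : ℝ := max B1 0 with hBdef
  have hA0 : 0 ≤ A := le_max_right _ _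
  have hB0 : 0 ≤ B := le_max_right _ _
  have hA : ∀ v : ℝ, 1 - C₀ ≤ v → f v ≤ A := by
    intro v hv
    rcases le_or_gt T v with h | h
    · exact le_trans (hT v h) hA0
    · have := hA1 v ⟨hv, h.le⟩
      rw [Real.norm_eq_abs] at this
      exact le_trans (le_trans (le_abs_self _) this) (le_max_left _ _)
  have hB : ∀ v : ℝ, v ≤ C₀ - 1 → -B ≤ f v := by
    intro v hv
    rcases le_or_gt v S with h | h
    · linarith [hS v h]
    · have := hB1 v ⟨h.le, hv⟩
      rw [Real.norm_eq_abs] at this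
      have := (abs_le.mp this).1
      have hBB : B1 ≤ B := le_max_left _ _
      linarith
  set K0' : ℝ := max K0 0 with hK0'def
  set K1' : ℝ := max K1 0 with hK1'def
  set K2' : ℝ := max K2 0 with hK2'def
  have hK0'0 : 0 ≤ K0' := le_max_right _ _
  have hK1'0 : 0 ≤ K1' := le_max_right _ _
  have hK2'0 : 0 ≤ K2' := le_max_right _ _
  have hbK0 : ∀ x ∈ Icc (-(C₀+1)) (C₀+1), |f x| ≤ K0' := fun x hx =>
    le_trans (by simpa [Real.norm_eq_abs] using hK0 x hx) (le_max_left _ _)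
  have hbK1 : ∀ x ∈ Icc (-(C₀+1)) (C₀+1), |deriv f x| ≤ K1' := fun x hx =>
    le_trans (by simpa [Real.norm_eq_abs] using hK1 x hx) (le_max_left _ _)
  have hbK2 : ∀ x ∈ Icc (-(C₀+1)) (C₀+1), |deriv (deriv f) x| ≤ K2' := fun x hx =>
    le_trans (by simpa [Real.norm_eq_abs] using hK2 x hx) (le_max_left _ _)
  -- Taylor bound for small R
  have key : ∀ u R : ℝ, |u| ≤ C₀ → |R| ≤ 1 →
      |f (u + R) - f u - deriv f u * R| ≤ K2' * R ^ 2 := by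
    intro u R hu hR
    have hmem : ∀ t ∈ uIcc (0:ℝ) R, u + t ∈ Icc (-(C₀+1)) (C₀+1) := by
      intro t ht
      have h1 : -|R| ≤ t := le_trans (le_min (by linarith [abs_nonneg R]) (neg_abs_le R)) ht.1
      have h2 : t ≤ |R| := le_trans ht.2 (max_le (abs_nonneg R) (le_abs_self R))
      have := abs_le.mp hu
      constructor <;> [linarith; linarith]
    have humem : u ∈ Icc (-(C₀+1)) (C₀+1) := by
      have := abs_le.mp hu; constructor <;> [linarith; linarith]
    have hstep : ∀ t ∈ uIcc (0:ℝ) R, ‖deriv f (u + t) - deriv f u‖ ≤ K2' * |R| := by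
      intro t ht
      have hder : ∀ x ∈ Icc (-(C₀+1)) (C₀+1),
          HasDerivWithinAt (deriv f) (deriv (deriv f) x) (Icc (-(C₀+1)) (C₀+1)) x :=
        fun x _ => (hdf1 x).hasDerivAt.hasDerivWithinAt
      have hbd : ∀ x ∈ Icc (-(C₀+1)) (C₀+1), ‖deriv (deriv f) x‖ ≤ K2' := by
        intro x hx; rw [Real.norm_eq_abs]; exact hbK2 x hx
      have := Convex.norm_image_sub_le_of_norm_hasDerivWithin_le hder hbd (convex_Icc _ _)
        humem (hmem t ht)
      have htR : |t| ≤ |R| := by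
        have h1 : -|R| ≤ t := le_trans (le_min (by linarith [abs_nonneg R]) (neg_abs_le R)) ht.1
        have h2 : t ≤ |R| := le_trans ht.2 (max_le (abs_nonneg R) (le_abs_self R))
        exact abs_le.mpr ⟨h1, h2⟩
      have : ‖deriv f (u + t) - deriv f u‖ ≤ K2' * |t| := by
        simpa [Real.norm_eq_abs, add_sub_cancel_left] using this
      exact le_trans this (by nlinarith)
    have hg : ∀ t : ℝ, HasDerivAt (fun s => f (u + s) - f u - deriv f u * s)
        (deriv f (u + t) - deriv f u) t := by
      intro t
      have h1 : HasDerivAt (fun s : ℝ => f (u + s)) (deriv f (u + t)) t := by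
        have := ((hd1 (u + t)).hasDerivAt).comp t ((hasDerivAt_id t).const_add u)
        rw [mul_one] at this
        exact this
      have h2 : HasDerivAt (fun s : ℝ => deriv f u * s) (deriv f u) t := by
        simpa using (hasDerivAt_id t).const_mul (deriv f u)
      exact (h1.sub_const (f u)).sub h2
    have := Convex.norm_image_sub_le_of_norm_hasDerivWithin_le
      (fun x (_ : x ∈ uIcc (0:ℝ) R) => (hg x).hasDerivWithinAt) hstep (convex_uIcc _ _)
      left_mem_uIcc right_mem_uIcc
    have h0 : f (u + 0) - f u - deriv f u * 0 = 0 := by simp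
    rw [h0, sub_zero, sub_zero, Real.norm_eq_abs, Real.norm_eq_abs] at this
    calc |f (u + R) - f u - deriv f u * R| ≤ K2' * |R| * |R| := this
      _ = K2' * R ^ 2 := by rw [mul_assoc, ← abs_mul, ← sq, abs_pow, sq_abs]
  refine ⟨K0' + K1' + K2' + A + B + 1, by linarith, ?_⟩
  intro u R hu
  have hrp : (0:ℝ) ≤ |R| ^ (p + 2) := Real.rpow_nonneg (abs_nonneg R) _
  rcases le_or_gt |R| 1 with hR | hR
  · -- small R
    rcases eq_or_ne R 0 with rfl | hR0
    · simp [Real.zero_rpow (by linarith : p + 2 ≠ 0)]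
    have hRpos : 0 < |R| := abs_pos.mpr hR0
    have h3 : |R| ^ (3:ℝ) ≤ |R| ^ (p + 2) :=
      Real.rpow_le_rpow_of_exponent_ge hRpos hR (by linarith)
    have h3' : |R| ^ (3:ℝ) = |R| ^ (3:ℕ) := by
      rw [← Real.rpow_natCast]; norm_num
    have hkey := key u R hu hR
    have habs : (f (u + R) - f u - deriv f u * R) * R ≤ K2' * R ^ 2 * |R| := by
      calc (f (u + R) - f u - deriv f u * R) * R ≤ |(f (u + R) - f u - deriv f u * R) * R| :=
            le_abs_self _
        _ = |f (u + R) - f u - deriv f u * R| * |R| := abs_mul _ _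
        _ ≤ K2' * R ^ 2 * |R| := by nlinarith [abs_nonneg R]
    have heq : K2' * R ^ 2 * |R| = K2' * |R| ^ (3:ℕ) := by
      rw [← sq_abs]; ring
    calc (f (u + R) - f u - deriv f u * R) * R ≤ K2' * |R| ^ (3:ℕ) := by rw [← heq]; exact habs
      _ ≤ K2' * |R| ^ (p + 2) := by rw [← h3']; exact mul_le_mul_of_nonneg_left h3 hK2'0
      _ ≤ (K0' + K1' + K2' + A + B + 1) * |R| ^ (p + 2) :=
          mul_le_mul_of_nonneg_right (by linarith) hrp
  · -- large R
    have hR1 : 1 ≤ |R| := hR.le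
    have h1 : |R| ≤ |R| ^ (p + 2) := by
      calc |R| = |R| ^ (1:ℝ) := (Real.rpow_one _).symm
        _ ≤ |R| ^ (p + 2) := Real.rpow_le_rpow_of_exponent_le hR1 (by linarith)
    have h2 : |R| ^ (2:ℕ) ≤ |R| ^ (p + 2) := by
      have : |R| ^ ((2:ℕ):ℝ) ≤ |R| ^ (p + 2) :=
        Real.rpow_le_rpow_of_exponent_le hR1 (by push_cast; linarith)
      rwa [Real.rpow_natCast] at this
    have huab := abs_le.mp hu
    have humem : u ∈ Icc (-(C₀+1)) (C₀+1) := by constructor <;> [linarith; linarith]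
    have hfu := hbK0 u humem
    have hfu' := hbK1 u humem
    -- term 1 : f(u+R) * R ≤ (A + B) * |R|
    have t1 : f (u + R) * R ≤ (A + B) * |R| := by
      rcases le_total 0 R with h | h
      · have hRe : |R| = R := abs_of_nonneg h
        have : 1 - C₀ ≤ u + R := by rw [hRe] at hR1; linarith
        have := hA (u + R) this
        rw [hRe]; nlinarith
      · have hRe : |R| = -R := abs_of_nonpos h
        have : u + R ≤ C₀ - 1 := by rw [hRe] at hR1; linarith
        have := hB (u + R) this
        rw [hRe]; nlinarith
    -- term 2 : -(f u) * R ≤ K0' * |R|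
    have t2 : -(f u) * R ≤ K0' * |R| := by
      have : |(-(f u)) * R| ≤ K0' * |R| := by
        rw [abs_mul, abs_neg]
        exact mul_le_mul_of_nonneg_right hfu (abs_nonneg R)
      linarith [le_abs_self ((-(f u)) * R)]
    -- term 3 : -(deriv f u) * R * R ≤ K1' * |R|^2
    have t3 : -(deriv f u) * R * R ≤ K1' * |R| ^ (2:ℕ) := by
      have : -(deriv f u) * R * R ≤ |deriv f u| * R ^ 2 := by nlinarith [abs_nonneg (deriv f u), neg_abs_le (deriv f u), sq_nonneg R]
      rw [← sq_abs R] at this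
      exact le_trans this (mul_le_mul_of_nonneg_right hfu' (by positivity))
    have expand : (f (u + R) - f u - deriv f u * R) * R
        = f (u + R) * R + (-(f u)) * R + (-(deriv f u)) * R * R := by ring
    rw [expand]
    calc f (u + R) * R + (-(f u)) * R + (-(deriv f u)) * R * R
        ≤ (A + B) * |R| + K0' * |R| + K1' * |R| ^ (2:ℕ) := by linarith
      _ ≤ (A + B) * |R| ^ (p+2) + K0' * |R| ^ (p+2) + K1' * |R| ^ (p+2) := by
          have := mul_le_mul_of_nonneg_left h1 (by linarith : (0:ℝ) ≤ A + B)
          have := mul_le_mul_of_nonneg_left h1 hK0'0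
          have := mul_le_mul_of_nonneg_left h2 hK1'0
          linarith
      _ = (A + B + K0' + K1') * |R| ^ (p + 2) := by ring
      _ ≤ (K0' + K1' + K2' + A + B + 1) * |R| ^ (p + 2) :=
          mul_le_mul_of_nonneg_right (by linarith) hrp
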